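/- If λ ≠ 0 is an eigenvalue of the generalised Kreĭn–Feller operator Δ_{ν,μ} with eigenfunction f (i.e., Δ_{ν,μ} f = λ f with Robin boundary conditions γ), then λ is an eigenvalue of the classical Kreĭn–Feller operator Δ_{ν∘F_μ^{-1},Λ} with eigenfunction f ∘ F̌_μ^{-1} and the same boundary conditions; conversely if Δ_{ν∘F_μ^{-1},Λ} g = λ g then Δ_{ν,μ}(g ∘ F_μ) = λ (g ∘ F_μ). -/

import Mathlib

set_option linter.unusedSectionVars false
set_option linter.unusedVariables false
set_option maxHeartbeats 1000000


open MeasureTheory Set Filter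

/-- Distribution function of a measure on `[0,1]`. -/
noncomputable def Fdist (μ : Measure ℝ) (x : ℝ) : ℝ := (μ (Set.Icc 0 x)).toReal

/-- Pseudo-inverse of the distribution function. -/
noncomputable def Finv (μ : Measure ℝ) (x : ℝ) : ℝ :=
  sInf {y ∈ Set.Icc (0:ℝ) 1 | x ≤ Fdist μ y}

/-- Topological support of a measure. -/
def msupport (μ : Measure ℝ) : Set ℝ := {x | ∀ U : Set ℝ, IsOpen U → x ∈ U → 0 < μ U}

/-- "f is in the domain of the Kreĭn-Feller operator w.r.t. speed measure ρ and
scale F with Δf = h and derivative b at 0". -/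
def KFdom (ρ : Measure ℝ) (F : ℝ → ℝ) (f h : ℝ → ℝ) (b : ℝ) : Prop :=
  ∀ x ∈ Set.Icc (0:ℝ) 1,
    f x = f 0 + b * F x + ∫ y in Set.Icc 0 x, (F x - F y) * h y ∂ρ

/-- Robin boundary conditions. -/
def Robin (ρ : Measure ℝ) (f h : ℝ → ℝ) (b α β : ℝ) : Prop :=
  f 0 * Real.cos α - b * Real.sin α = 0 ∧
  f 1 * Real.cos β + (b + ∫ y in Set.Icc (0:ℝ) 1, h y ∂ρ) * Real.sin β = 0


section Aux
variable {μ : Measure ℝ} [IsProbabilityMeasure μ] [NullSingletonClass μ]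

lemma Fdist_mono : Monotone (Fdist μ) := fun x y hxy =>
  ENNReal.toReal_mono (measure_ne_top μ _) (measure_mono (Icc_subset_Icc le_rfl hxy))

lemma Fdist_nonneg (x : ℝ) : 0 ≤ Fdist μ x := ENNReal.toReal_nonneg

lemma Fdist_le_one (x : ℝ) : Fdist μ x ≤ 1 := by
  have : μ (Set.Icc 0 x) ≤ 1 := prob_le_one
  simpa [Fdist] using ENNReal.toReal_mono (by simp) this

lemma Fdist_zero : Fdist μ 0 = 0 := by
  simp [Fdist, Set.Icc_self, measure_singleton]

lemma Fdist_one (hμc : μ (Set.Icc (0:ℝ) 1)ᶜ = 0) : Fdist μ 1 = 1 := by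
  have h : μ (Set.Icc (0:ℝ) 1) = 1 := by
    have := measure_add_measure_compl (μ := μ) (measurableSet_Icc (a := (0:ℝ)) (b := 1))
    rw [hμc, add_zero] at this
    simp [this]
  simp [Fdist, h]

lemma Fdist_eq_cdf (hμc : μ (Set.Icc (0:ℝ) 1)ᶜ = 0) : Fdist μ = ProbabilityTheory.cdf μ := by
  funext x
  rw [ProbabilityTheory.cdf_eq_real, Fdist, measureReal_def]
  congr 1
  refine le_antisymm (measure_mono Icc_subset_Iic_self) ?_
  have hsub : Set.Iic x ⊆ Set.Icc 0 x ∪ (Set.Icc (0:ℝ) 1)ᶜ := by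
    intro z hz
    by_cases h0 : (0:ℝ) ≤ z
    · exact Or.inl ⟨h0, hz⟩
    · exact Or.inr (fun hmem => h0 hmem.1)
  calc μ (Set.Iic x) ≤ μ (Set.Icc 0 x ∪ (Set.Icc (0:ℝ) 1)ᶜ) := measure_mono hsub
    _ ≤ μ (Set.Icc 0 x) + μ (Set.Icc (0:ℝ) 1)ᶜ := measure_union_le _ _
    _ = μ (Set.Icc 0 x) := by rw [hμc, add_zero]

lemma Fdist_continuous (hμc : μ (Set.Icc (0:ℝ) 1)ᶜ = 0) : Continuous (Fdist μ) := by
  rw [Fdist_eq_cdf hμc]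
  refine continuous_iff_continuousAt.2 fun a => ?_
  rw [(ProbabilityTheory.monotone_cdf μ).continuousAt_iff_leftLim_eq_rightLim,
    StieltjesFunction.rightLim_eq]
  have h0 : (ProbabilityTheory.cdf μ).measure {a} = 0 := by
    rw [ProbabilityTheory.measure_cdf]; exact measure_singleton a
  rw [StieltjesFunction.measure_singleton, ENNReal.ofReal_eq_zero] at h0
  have hle : Function.leftLim (ProbabilityTheory.cdf μ) a ≤ ProbabilityTheory.cdf μ a :=
    (ProbabilityTheory.monotone_cdf μ).leftLim_le le_rfl
  linarith

-- the defining set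
lemma Finv_set_nonempty (hμc : μ (Set.Icc (0:ℝ) 1)ᶜ = 0) {t : ℝ} (ht : t ≤ 1) :
    ({y ∈ Set.Icc (0:ℝ) 1 | t ≤ Fdist μ y}).Nonempty :=
  ⟨1, ⟨⟨zero_le_one, le_rfl⟩, by rw [Fdist_one hμc]; exact ht⟩⟩

lemma Finv_bddBelow (t : ℝ) : BddBelow {y ∈ Set.Icc (0:ℝ) 1 | t ≤ Fdist μ y} :=
  ⟨0, fun y hy => hy.1.1⟩

lemma Finv_nonneg (hμc : μ (Set.Icc (0:ℝ) 1)ᶜ = 0) (t : ℝ) : 0 ≤ Finv μ t := by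
  by_cases ht : t ≤ 1
  · exact le_csInf (Finv_set_nonempty hμc ht) fun y hy => hy.1.1
  · have : {y ∈ Set.Icc (0:ℝ) 1 | t ≤ Fdist μ y} = ∅ := by
      ext y; simp only [mem_setOf_eq, mem_empty_iff_false, iff_false, not_and]
      intro hy h; exact ht (h.trans (Fdist_le_one y))
    rw [Finv, this, Real.sInf_empty]

lemma Finv_le_one (hμc : μ (Set.Icc (0:ℝ) 1)ᶜ = 0) {t : ℝ} (ht : t ≤ 1) : Finv μ t ≤ 1 :=
  csInf_le (Finv_bddBelow t) ⟨⟨zero_le_one, le_rfl⟩, by rw [Fdist_one hμc]; exact ht⟩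

lemma Finv_mem (hμc : μ (Set.Icc (0:ℝ) 1)ᶜ = 0) {t : ℝ} (ht : t ≤ 1) :
    Finv μ t ∈ Set.Icc (0:ℝ) 1 := ⟨Finv_nonneg hμc t, Finv_le_one hμc ht⟩

lemma Finv_zero : Finv μ 0 = 0 := by
  have : {y ∈ Set.Icc (0:ℝ) 1 | (0:ℝ) ≤ Fdist μ y} = Set.Icc (0:ℝ) 1 := by
    ext y; simp [Fdist_nonneg]
  rw [Finv, this, csInf_Icc zero_le_one]

lemma Fdist_Finv (hμc : μ (Set.Icc (0:ℝ) 1)ᶜ = 0) {t : ℝ} (ht : t ∈ Set.Icc (0:ℝ) 1) :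
    Fdist μ (Finv μ t) = t := by
  set S := {y ∈ Set.Icc (0:ℝ) 1 | t ≤ Fdist μ y} with hS
  have hSc : IsClosed S := by
    have : S = Set.Icc (0:ℝ) 1 ∩ (Fdist μ) ⁻¹' Set.Ici t := rfl
    rw [this]
    exact isClosed_Icc.inter (IsClosed.preimage (Fdist_continuous hμc) isClosed_Ici)
  have hmem : Finv μ t ∈ S := hSc.csInf_mem (Finv_set_nonempty hμc ht.2) (Finv_bddBelow t)
  have hge : t ≤ Fdist μ (Finv μ t) := hmem.2
  -- IVT
  have h0 : Fdist μ 0 = 0 := Fdist_zero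
  have hIVT : t ∈ Fdist μ '' Set.Icc 0 (Finv μ t) := by
    apply intermediate_value_Icc (Finv_nonneg hμc t) (Fdist_continuous hμc).continuousOn
    exact ⟨by rw [h0]; exact ht.1, hge⟩
  obtain ⟨y, hy, hyt⟩ := hIVT
  have hyS : y ∈ S := ⟨⟨hy.1, hy.2.trans (Finv_le_one hμc ht.2)⟩, le_of_eq hyt.symm⟩
  have : Finv μ t ≤ y := csInf_le (Finv_bddBelow t) hyS
  rw [← le_antisymm hy.2 this]; exact hyt

lemma Finv_Fdist_le {y : ℝ} (hy : y ∈ Set.Icc (0:ℝ) 1) : Finv μ (Fdist μ y) ≤ y :=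
  csInf_le (Finv_bddBelow _) ⟨hy, le_rfl⟩

lemma Finv_measurable (hμc : μ (Set.Icc (0:ℝ) 1)ᶜ = 0) : Measurable (Finv μ) := by
  have hmono : Monotone (fun t => Finv μ (min t 1)) := by
    intro t1 t2 h
    exact csInf_le_csInf (Finv_bddBelow _) (Finv_set_nonempty hμc (min_le_right t2 1))
      (fun y hy => ⟨hy.1, le_trans (by exact min_le_min h le_rfl) hy.2⟩)
  have heq : Finv μ = fun t => if t ≤ 1 then Finv μ (min t 1) else 0 := by
    funext t
    by_cases ht : t ≤ 1
    · rw [if_pos ht, min_eq_left ht]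
    · rw [if_neg ht]
      have : {y ∈ Set.Icc (0:ℝ) 1 | t ≤ Fdist μ y} = ∅ := by
        ext y; simp only [mem_setOf_eq, mem_empty_iff_false, iff_false, not_and]
        intro hy h; exact ht (h.trans (Fdist_le_one y))
      rw [Finv, this, Real.sInf_empty]
  rw [heq]
  exact Measurable.ite measurableSet_Iic hmono.measurable measurable_const

end Aux

section Main
variable {μ : Measure ℝ} [IsProbabilityMeasure μ] [NullSingletonClass μ]

lemma KF_flat {ν : Measure ℝ} {f h : ℝ → ℝ} {b : ℝ} (hf : KFdom ν (Fdist μ) f h b)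
    {y' y : ℝ} (hy' : y' ∈ Set.Icc (0:ℝ) 1) (hy : y ∈ Set.Icc (0:ℝ) 1) (hle : y' ≤ y)
    (heqF : Fdist μ y' = Fdist μ y) : f y' = f y := by
  rw [hf y hy, hf y' hy', heqF]
  congr 1
  rw [← integral_indicator measurableSet_Icc, ← integral_indicator measurableSet_Icc]
  refine integral_congr_ae (Eventually.of_forall fun z => ?_)
  by_cases hz : z ∈ Set.Icc (0:ℝ) y'
  · have hz2 : z ∈ Set.Icc (0:ℝ) y := ⟨hz.1, hz.2.trans hle⟩
    rw [indicator_of_mem hz, indicator_of_mem hz2]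
  · rw [indicator_of_notMem hz]
    by_cases hz2 : z ∈ Set.Icc (0:ℝ) y
    · rw [indicator_of_mem hz2]
      have hgt : y' ≤ z := le_of_not_ge fun hc => hz ⟨hz2.1, hc⟩
      have h1 : Fdist μ y ≤ Fdist μ z := heqF ▸ Fdist_mono hgt
      have h2 : Fdist μ z ≤ Fdist μ y := Fdist_mono hz2.2
      rw [le_antisymm h2 h1, sub_self, zero_mul]
    · rw [indicator_of_notMem hz2]

lemma mapIntegral {φ : ℝ → ℝ} (hφ : Measurable φ) (ν : Measure ℝ) (t : ℝ) :
    ∫ s in Set.Icc 0 t, φ s ∂(ν.map (Fdist μ)) = ∫ y, (Set.Icc (0:ℝ) t).indicator φ (Fdist μ y) ∂ν := by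
  rw [← integral_indicator measurableSet_Icc,
    integral_map Fdist_mono.measurable.aemeasurable
      (hφ.indicator measurableSet_Icc).aestronglyMeasurable]

end Main


theorem stmt_14 (μ ν : Measure ℝ) [IsProbabilityMeasure μ] [IsProbabilityMeasure ν] [NullSingletonClass μ]
    (hμc : μ (Set.Icc (0:ℝ) 1)ᶜ = 0) (hνc : ν (Set.Icc (0:ℝ) 1)ᶜ = 0)
    (hν0 : ν {(0:ℝ)} = 0) (hν1 : ν {(1:ℝ)} = 0)
    (hsupp : msupport ν ⊆ msupport μ)
    (lam α β : ℝ) (hlam : lam ≠ 0)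
    (hα : α ∈ Set.Icc 0 (Real.pi/2)) (hβ : β ∈ Set.Icc 0 (Real.pi/2)) :
    (∀ (f : ℝ → ℝ) (b : ℝ), Continuous f →
      KFdom ν (Fdist μ) f (fun y => lam * f y) b →
      Robin ν f (fun y => lam * f y) b α β →
      KFdom (ν.map (Fdist μ)) id (f ∘ Finv μ) (fun y => lam * f (Finv μ y)) b ∧
      Robin (ν.map (Fdist μ)) (f ∘ Finv μ) (fun y => lam * f (Finv μ y)) b α β) ∧
    (∀ (g : ℝ → ℝ) (b : ℝ), Continuous g →
      KFdom (ν.map (Fdist μ)) id g (fun y => lam * g y) b →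
      KFdom ν (Fdist μ) (g ∘ Fdist μ) (fun y => lam * g (Fdist μ y)) b) := by
  have hae : ∀ᵐ y ∂ν, y ∈ Set.Icc (0:ℝ) 1 := by
    rw [ae_iff]
    exact hνc
  constructor
  · intro f b hfc hf hR
    -- key: f (Finv (Fdist y)) = f y for y ∈ [0,1]
    have hflat : ∀ y ∈ Set.Icc (0:ℝ) 1, f (Finv μ (Fdist μ y)) = f y := by
      intro y hy
      have hFy : Fdist μ y ∈ Set.Icc (0:ℝ) 1 := ⟨Fdist_nonneg y, Fdist_le_one y⟩
      exact KF_flat hf (Finv_mem hμc hFy.2) hy (Finv_Fdist_le hy) (Fdist_Finv hμc hFy)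
    constructor
    · intro t ht
      have hFt : Fdist μ (Finv μ t) = t := Fdist_Finv hμc ht
      have hφ : Measurable fun s => (t - s) * (lam * f (Finv μ s)) :=
        ((measurable_const.sub measurable_id).mul
          (measurable_const.mul (hfc.measurable.comp (Finv_measurable hμc))))
      have key : (∫ s in Set.Icc 0 t, (t - s) * (lam * f (Finv μ s)) ∂(ν.map (Fdist μ)))
          = ∫ z in Set.Icc 0 (Finv μ t), (Fdist μ (Finv μ t) - Fdist μ z) * (lam * f z) ∂ν := by
        rw [mapIntegral hφ, ← integral_indicator measurableSet_Icc]
        refine integral_congr_ae ?_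
        filter_upwards [hae] with y hy
        by_cases hyt : y ≤ Finv μ t
        · have hmem1 : Fdist μ y ∈ Set.Icc (0:ℝ) t :=
            ⟨Fdist_nonneg y, hFt ▸ Fdist_mono hyt⟩
          have hmem2 : y ∈ Set.Icc (0:ℝ) (Finv μ t) := ⟨hy.1, hyt⟩
          rw [Set.indicator_of_mem hmem1 (fun s => (t - s) * (lam * f (Finv μ s))),
            Set.indicator_of_mem hmem2
              (fun z => (Fdist μ (Finv μ t) - Fdist μ z) * (lam * f z)),
            hflat y hy, hFt]
        · have hmem2 : y ∉ Set.Icc (0:ℝ) (Finv μ t) := fun h => hyt h.2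
          rw [Set.indicator_of_notMem hmem2
            (fun z => (Fdist μ (Finv μ t) - Fdist μ z) * (lam * f z))]
          by_cases hFy : Fdist μ y ∈ Set.Icc (0:ℝ) t
          · rw [Set.indicator_of_mem hFy (fun s => (t - s) * (lam * f (Finv μ s)))]
            have h1 : t ≤ Fdist μ y := hFt ▸ Fdist_mono (le_of_not_ge hyt)
            rw [le_antisymm hFy.2 h1, sub_self, zero_mul]
          · rw [Set.indicator_of_notMem hFy (fun s => (t - s) * (lam * f (Finv μ s)))]
      have hmain := hf (Finv μ t) (Finv_mem hμc ht.2)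
      simp only [Function.comp_apply, id_eq, Finv_zero]
      rw [key, hmain, hFt]
    · obtain ⟨hR1, hR2⟩ := hR
      have h0 : (f ∘ Finv μ) 0 = f 0 := by simp [Finv_zero]
      have h1 : (f ∘ Finv μ) 1 = f 1 := by
        have hF1 : Fdist μ (Finv μ 1) = 1 := Fdist_Finv hμc ⟨zero_le_one, le_rfl⟩
        exact KF_flat hf (Finv_mem hμc le_rfl) ⟨zero_le_one, le_rfl⟩
          (Finv_le_one hμc le_rfl) (by rw [hF1, Fdist_one hμc])
      have hφ : Measurable fun s => lam * f (Finv μ s) :=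
        measurable_const.mul (hfc.measurable.comp (Finv_measurable hμc))
      have hint : (∫ s in Set.Icc (0:ℝ) 1, lam * f (Finv μ s) ∂(ν.map (Fdist μ)))
          = ∫ y in Set.Icc (0:ℝ) 1, lam * f y ∂ν := by
        rw [mapIntegral hφ, ← integral_indicator measurableSet_Icc]
        refine integral_congr_ae ?_
        filter_upwards [hae] with y hy
        have hFy : Fdist μ y ∈ Set.Icc (0:ℝ) 1 := ⟨Fdist_nonneg y, Fdist_le_one y⟩
        rw [Set.indicator_of_mem hFy (fun s => lam * f (Finv μ s)),
          Set.indicator_of_mem hy (fun y => lam * f y), hflat y hy]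
      exact ⟨by rw [h0]; exact hR1, by rw [h1, hint]; exact hR2⟩
  · intro g b hgc hg x hx
    have hFx : Fdist μ x ∈ Set.Icc (0:ℝ) 1 := ⟨Fdist_nonneg x, Fdist_le_one x⟩
    have hmain := hg (Fdist μ x) hFx
    have hφ : Measurable fun s => (Fdist μ x - s) * (lam * g s) :=
      (measurable_const.sub measurable_id).mul (measurable_const.mul hgc.measurable)
    have key : (∫ s in Set.Icc 0 (Fdist μ x), (Fdist μ x - s) * (lam * g s) ∂(ν.map (Fdist μ)))
        = ∫ y in Set.Icc 0 x, (Fdist μ x - Fdist μ y) * (lam * g (Fdist μ y)) ∂ν := by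
      rw [mapIntegral hφ, ← integral_indicator measurableSet_Icc]
      refine integral_congr_ae ?_
      filter_upwards [hae] with y hy
      by_cases hyx : y ≤ x
      · have hmem1 : Fdist μ y ∈ Set.Icc (0:ℝ) (Fdist μ x) := ⟨Fdist_nonneg y, Fdist_mono hyx⟩
        have hmem2 : y ∈ Set.Icc (0:ℝ) x := ⟨hy.1, hyx⟩
        rw [Set.indicator_of_mem hmem1 (fun s => (Fdist μ x - s) * (lam * g s)),
          Set.indicator_of_mem hmem2
            (fun y => (Fdist μ x - Fdist μ y) * (lam * g (Fdist μ y)))]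
      · have hmem2 : y ∉ Set.Icc (0:ℝ) x := fun h => hyx h.2
        rw [Set.indicator_of_notMem hmem2
          (fun y => (Fdist μ x - Fdist μ y) * (lam * g (Fdist μ y)))]
        by_cases hFy : Fdist μ y ∈ Set.Icc (0:ℝ) (Fdist μ x)
        · rw [Set.indicator_of_mem hFy (fun s => (Fdist μ x - s) * (lam * g s))]
          have h1 : Fdist μ x ≤ Fdist μ y := Fdist_mono (le_of_not_ge hyx)
          rw [le_antisymm hFy.2 h1, sub_self, zero_mul]
        · rw [Set.indicator_of_notMem hFy (fun s => (Fdist μ x - s) * (lam * g s))]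
    simp only [Function.comp_apply, Fdist_zero]
    rw [← key]
    simpa only [id_eq] using hmain
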